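/- The function F₁(x₀,p₀,x₁,p₁,x₂,p₂) = (x₁-x₂)√(p₁p₂) + (x₂-x₀)√(p₂p₀) + (x₀-x₁)√(p₀p₁) is a common first integral of the diagonal prolongations of X₁, X₂, X₃, X₄, X₅ to three copies of O = {p < 0}; that is, the derivative of F₁ along each prolonged vector field vanishes identically. -/

import Mathlib

open Real

/-- The half-plane `O = {(x,p) : p < 0}`. -/
def O : Set (ℝ × ℝ) := {z | z.2 < 0}

/-- Lie bracket of vector fields on `ℝ²`: `[V,W] = DW·V - DV·W`. -/
noncomputable def bracket (V W : ℝ × ℝ → ℝ × ℝ) (z : ℝ × ℝ) : ℝ × ℝ :=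
  fderiv ℝ W z (V z) - fderiv ℝ V z (W z)

noncomputable def X₁ : ℝ × ℝ → ℝ × ℝ := fun z => (1 / Real.sqrt (-z.2), 0)
def X₂ : ℝ × ℝ → ℝ × ℝ := fun _ => (1, 0)
def X₃ : ℝ × ℝ → ℝ × ℝ := fun z => (z.1, -z.2)
def X₄ : ℝ × ℝ → ℝ × ℝ := fun z => (z.1 ^ 2, -2 * z.1 * z.2)
noncomputable def X₅ : ℝ × ℝ → ℝ × ℝ :=
  fun z => (z.1 / Real.sqrt (-z.2), 2 * Real.sqrt (-z.2))

noncomputable def XF : Fin 5 → (ℝ × ℝ → ℝ × ℝ) := ![X₁, X₂, X₃, X₄, X₅]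

/-- First integral `F₁` on `O³`. -/
noncomputable def F₁ (z : Fin 3 → ℝ × ℝ) : ℝ :=
  ((z 1).1 - (z 2).1) * (Real.sqrt (-(z 1).2) * Real.sqrt (-(z 2).2)) +
  ((z 2).1 - (z 0).1) * (Real.sqrt (-(z 2).2) * Real.sqrt (-(z 0).2)) +
  ((z 0).1 - (z 1).1) * (Real.sqrt (-(z 0).2) * Real.sqrt (-(z 1).2))

noncomputable def Px (i : Fin 3) : (Fin 3 → ℝ × ℝ) →L[ℝ] ℝ :=
  (ContinuousLinearMap.fst ℝ ℝ ℝ).comp (ContinuousLinearMap.proj i)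

noncomputable def Pp (i : Fin 3) : (Fin 3 → ℝ × ℝ) →L[ℝ] ℝ :=
  (ContinuousLinearMap.snd ℝ ℝ ℝ).comp (ContinuousLinearMap.proj i)

/-- `F₁` is a common first integral of the diagonal prolongations
of `X₁,…,X₅` to `O³`: the derivative of `F₁` along each prolonged vector field
`X̃ z = (i ↦ X (z i))` vanishes identically on `O³`. -/
theorem F1_first_integral :
    ∀ X ∈ ({X₁, X₂, X₃, X₄, X₅} : Set (ℝ × ℝ → ℝ × ℝ)),
      ∀ z : Fin 3 → ℝ × ℝ, (∀ i, (z i).2 < 0) →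
        fderiv ℝ F₁ z (fun i => X (z i)) = 0 := by
  intro X hX z hz
  have hp : ∀ i, (0:ℝ) < -(z i).2 := fun i => by linarith [hz i]
  have hs : ∀ i, Real.sqrt (-(z i).2) ≠ 0 :=
    fun i => (Real.sqrt_pos.2 (hp i)).ne'
  have hx : ∀ i, HasFDerivAt (fun z : Fin 3 → ℝ × ℝ => (z i).1) (Px i) z :=
    fun i => (Px i).hasFDerivAt
  have hsq : ∀ i, HasFDerivAt (fun z : Fin 3 → ℝ × ℝ => Real.sqrt (-(z i).2))
      ((1 / (2 * Real.sqrt (-(z i).2))) • (-Pp i)) z := by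
    intro i
    have hinner : HasFDerivAt (fun z : Fin 3 → ℝ × ℝ => -(z i).2) (-Pp i) z :=
      (-Pp i).hasFDerivAt
    exact (Real.hasDerivAt_sqrt (hp i).ne').comp_hasFDerivAt z hinner
  have hD : HasFDerivAt F₁ _ z :=
    ((((hx 1).sub (hx 2)).mul ((hsq 1).mul (hsq 2))).add
      (((hx 2).sub (hx 0)).mul ((hsq 2).mul (hsq 0)))).add
      (((hx 0).sub (hx 1)).mul ((hsq 0).mul (hsq 1)))
  rw [hD.fderiv]
  have hm : ∀ i, Real.sqrt (-(z i).2) * Real.sqrt (-(z i).2) = -(z i).2 :=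
    fun i => Real.mul_self_sqrt (hp i).le
  simp only [ContinuousLinearMap.add_apply, ContinuousLinearMap.smul_apply,
    ContinuousLinearMap.sub_apply, ContinuousLinearMap.neg_apply,
    ContinuousLinearMap.comp_apply, ContinuousLinearMap.proj_apply,
    ContinuousLinearMap.coe_fst', ContinuousLinearMap.coe_snd',
    Px, Pp, smul_eq_mul, Pi.sub_apply, Pi.mul_apply]
  simp only [Set.mem_insert_iff, Set.mem_singleton_iff] at hX
  rcases hX with h | h | h | h | h <;> subst h
  · simp only [X₁]
    have e0 := hm 0; have e1 := hm 1; have e2 := hm 2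
    have n0 := hs 0; have n1 := hs 1; have n2 := hs 2
    set s0 := Real.sqrt (-(z 0).2)
    set s1 := Real.sqrt (-(z 1).2)
    set s2 := Real.sqrt (-(z 2).2)
    try simp only [show (z 0).2 = -(s0*s0) by linarith, show (z 1).2 = -(s1*s1) by linarith,
        show (z 2).2 = -(s2*s2) by linarith]
    field_simp
    try ring
  · simp only [X₂]
    try ring
  · simp only [X₃]
    have e0 := hm 0; have e1 := hm 1; have e2 := hm 2
    have n0 := hs 0; have n1 := hs 1; have n2 := hs 2
    set s0 := Real.sqrt (-(z 0).2)
    set s1 := Real.sqrt (-(z 1).2)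
    set s2 := Real.sqrt (-(z 2).2)
    try simp only [show (z 0).2 = -(s0*s0) by linarith, show (z 1).2 = -(s1*s1) by linarith,
        show (z 2).2 = -(s2*s2) by linarith]
    field_simp
    try ring
  · simp only [X₄]
    have e0 := hm 0; have e1 := hm 1; have e2 := hm 2
    have n0 := hs 0; have n1 := hs 1; have n2 := hs 2
    set s0 := Real.sqrt (-(z 0).2)
    set s1 := Real.sqrt (-(z 1).2)
    set s2 := Real.sqrt (-(z 2).2)
    try simp only [show (z 0).2 = -(s0*s0) by linarith, show (z 1).2 = -(s1*s1) by linarith,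
        show (z 2).2 = -(s2*s2) by linarith]
    field_simp
    try ring
  · simp only [X₅]
    have e0 := hm 0; have e1 := hm 1; have e2 := hm 2
    have n0 := hs 0; have n1 := hs 1; have n2 := hs 2
    set s0 := Real.sqrt (-(z 0).2)
    set s1 := Real.sqrt (-(z 1).2)
    set s2 := Real.sqrt (-(z 2).2)
    try simp only [show (z 0).2 = -(s0*s0) by linarith, show (z 1).2 = -(s1*s1) by linarith,
        show (z 2).2 = -(s2*s2) by linarith]
    field_simp
    try ring
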